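/- Let 𝓗 be a complex inner product space, let ψ ∈ 𝓗 be a unit vector, let K be a natural number, let H_b : 𝓗 →ₗ[ℂ] 𝓗 (b : Fin K) be symmetric linear operators, and let m : Fin K → ℝ satisfy 0 < m b for every b. Setting M := ∑_b m b, one has Var_ψ(∑_b H_b) / M ≤ ∑_b Var_ψ(H_b) / m b. In particular, partitioning an observable never decreases the (optimally allocated) shot-noise bound. -/

import Mathlib

open Finset

/-- The quantum variance of an observable `O` in the state `ψ`:
`Var_ψ(O) = ‖O ψ‖² − (re⟪ψ, O ψ⟫)²`. -/
noncomputable def qVar {𝓗 : Type*} [NormedAddCommGroup 𝓗] [InnerProductSpace ℂ 𝓗]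
    (ψ : 𝓗) (O : 𝓗 →ₗ[ℂ] 𝓗) : ℝ :=
  ‖O ψ‖ ^ 2 - ((inner ℂ ψ (O ψ) : ℂ).re) ^ 2

lemma qVar_eq {𝓗 : Type*} [NormedAddCommGroup 𝓗] [InnerProductSpace ℂ 𝓗]
    (ψ : 𝓗) (hψ : ‖ψ‖ = 1) (O : 𝓗 →ₗ[ℂ] 𝓗) :
    qVar ψ O = ‖O ψ - (((inner ℂ ψ (O ψ) : ℂ).re : ℂ)) • ψ‖ ^ 2 := by
  have ha : RCLike.re (inner ℂ (O ψ) ((((inner ℂ ψ (O ψ) : ℂ).re : ℝ) : ℂ) • ψ) : ℂ)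
      = (inner ℂ ψ (O ψ) : ℂ).re ^ 2 := by
    rw [inner_smul_right, ← inner_conj_symm ψ (O ψ)]
    simp [sq]
    left; exact inner_re_symm (𝕜 := ℂ) (O ψ) ψ
  rw [qVar, @norm_sub_sq ℂ, ha, norm_smul, hψ]
  simp [Complex.norm_real, sq_abs]
  ring

/-- Partitioning an observable never decreases the shot-noise bound:
for any positive measurement allocation `m` with total budget `M = ∑ b, m b`,
`Var_ψ(∑ b, H b) / M ≤ ∑ b, Var_ψ(H b) / m b`. -/
theorem stmt2 {𝓗 : Type*} [NormedAddCommGroup 𝓗] [InnerProductSpace ℂ 𝓗]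
    (ψ : 𝓗) (hψ : ‖ψ‖ = 1) (K : ℕ) (H : Fin K → (𝓗 →ₗ[ℂ] 𝓗))
    (hH : ∀ b, (H b).IsSymmetric) (m : Fin K → ℝ) (hm : ∀ b, 0 < m b) :
    qVar ψ (∑ b, H b) / (∑ b, m b) ≤ ∑ b, qVar ψ (H b) / m b := by
  rcases Nat.eq_zero_or_pos K with hK | hK
  · subst hK; simp [qVar]
  set v : Fin K → 𝓗 := fun b => H b ψ - (((inner ℂ ψ (H b ψ) : ℂ).re : ℂ)) • ψ with hv
  have hM : 0 < ∑ b, m b := Finset.sum_pos (fun b _ => hm b)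
    (Finset.univ_nonempty_iff.mpr (Fin.pos_iff_nonempty.mp hK))
  have h1 : qVar ψ (∑ b, H b) = ‖∑ b, v b‖ ^ 2 := by
    rw [qVar_eq ψ hψ]
    congr 1
    rw [hv]
    simp only [LinearMap.coe_sum, Finset.sum_apply, Finset.sum_sub_distrib, inner_sum]
    congr 1
    rw [← Finset.sum_smul]
    congr 1
    rw [Complex.re_sum]
    norm_cast
  have h2 : ‖∑ b, v b‖ ^ 2 ≤ (∑ b, ‖v b‖) ^ 2 :=
    pow_le_pow_left₀ (norm_nonneg _) (norm_sum_le Finset.univ v) 2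
  have h4 : ∀ b, qVar ψ (H b) = ‖v b‖ ^ 2 := fun b => qVar_eq ψ hψ (H b)
  calc qVar ψ (∑ b, H b) / (∑ b, m b) = ‖∑ b, v b‖ ^ 2 / (∑ b, m b) := by rw [h1]
    _ ≤ (∑ b, ‖v b‖) ^ 2 / (∑ b, m b) := by gcongr
    _ ≤ ∑ b, ‖v b‖ ^ 2 / m b :=
        Finset.sq_sum_div_le_sum_sq_div _ _ (fun b _ => hm b)
    _ = ∑ b, qVar ψ (H b) / m b := by simp_rw [h4]
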